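/- Let μ be a probability measure on ℝ^d that is radially symmetric and unimodal, i.e., it has density p(x) = f(‖x‖₂) for some non-increasing f : [0,∞) → [0,∞). For x ∈ ℝ^d and r > 0 let R(x,r) = μ(B(x,r)) be the mass of the closed Euclidean ball of radius r centered at x. Then for any r > 0 and any x, x' with ‖x‖₂ < ‖x'‖₂, we have R(x,r) ≥ R(x',r). -/

import Mathlib

open MeasureTheory
open scoped ENNReal RealInnerProductSpace

set_option maxHeartbeats 1000000 in
/-- For a radially symmetric unimodal probability measure `μ` on `ℝ^d`
(with density `f(‖x‖)` for a non-increasing `f`), the ball-mass function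
`x ↦ μ(B(x,r))` is radially non-increasing: if `‖x‖ < ‖x'‖` then
`μ(B(x,r)) ≥ μ(B(x',r))`. -/
theorem ball_mass_radially_monotone
    (d : ℕ) (f : ℝ → ℝ≥0∞) (hf_meas : Measurable f)
    (hf_mono : AntitoneOn f (Set.Ici 0))
    (μ : Measure (EuclideanSpace ℝ (Fin d)))
    (hμ : μ = volume.withDensity (fun x => f ‖x‖))
    (hprob : IsProbabilityMeasure μ) :
    ∀ r > (0:ℝ), ∀ x x' : EuclideanSpace ℝ (Fin d), ‖x‖ < ‖x'‖ →
      μ (Metric.closedBall x' r) ≤ μ (Metric.closedBall x r) := by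
  intro r hr x x' hxx'
  classical
  have hxne : x ≠ x' := by
    intro h; rw [h] at hxx'; exact lt_irrefl _ hxx'
  set v : EuclideanSpace ℝ (Fin d) := x' - x with hv
  have hvne : v ≠ 0 := sub_ne_zero.2 (Ne.symm hxne)
  set c : EuclideanSpace ℝ (Fin d) := (2:ℝ)⁻¹ • (x + x') with hc
  set K : Submodule ℝ (EuclideanSpace ℝ (Fin d)) := (ℝ ∙ v)ᗮ with hK
  set R := K.reflection with hR
  set σ : EuclideanSpace ℝ (Fin d) → EuclideanSpace ℝ (Fin d) :=
    fun y => c + R (y - c) with hσ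
  -- v belongs to Kᗮ
  have hvmem : v ∈ Kᗮ :=
    (Submodule.le_orthogonal_orthogonal (ℝ ∙ v)) (Submodule.mem_span_singleton_self v)
  have hRv : R v = -v := Submodule.reflection_mem_subspace_orthogonalComplement_eq_neg hvmem
  -- σ is an involution
  have hσσ : ∀ y, σ (σ y) = y := by
    intro y
    simp only [hσ, hR, add_sub_cancel_left, Submodule.reflection_reflection, add_sub_cancel]
  -- σ x = x'
  have hσx : σ x = x' := by
    have h1 : x - c = -((2:ℝ)⁻¹ • v) := by
      rw [hc, hv]; module
    rw [hσ]
    simp only [h1, map_neg, _root_.map_smul, hRv, smul_neg, neg_neg]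
    rw [hc, hv]; module
  have hσx' : σ x' = x := by
    rw [← hσx, hσσ]
  -- σ is an isometry for differences
  have hiso : ∀ y z, ‖σ y - σ z‖ = ‖y - z‖ := by
    intro y z
    have : σ y - σ z = R (y - z) := by
      show c + R (y - c) - (c + R (z - c)) = R (y - z)
      rw [add_sub_add_left_eq_sub, ← _root_.map_sub, sub_sub_sub_cancel_right]
    rw [this, R.norm_map]
  have hd1 : ∀ y, ‖σ y - x‖ = ‖y - x'‖ := by
    intro y; rw [← hσx', hiso]
  have hd2 : ∀ y, ‖σ y - x'‖ = ‖y - x‖ := by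
    intro y; rw [← hσx, hiso]
  -- σ is measure preserving
  have hMP : MeasurePreserving σ volume volume := by
    have h1 : MeasurePreserving (fun y : EuclideanSpace ℝ (Fin d) => c + y)
        volume volume := measurePreserving_add_left volume c
    have h2 : MeasurePreserving (fun y : EuclideanSpace ℝ (Fin d) => y + -c)
        volume volume := measurePreserving_add_right volume (-c)
    have h3 : MeasurePreserving (⇑R) volume volume := R.measurePreserving
    have hcomp : σ = (fun y : EuclideanSpace ℝ (Fin d) => c + y) ∘ (⇑R) ∘
        (fun y : EuclideanSpace ℝ (Fin d) => y + -c) := by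
      funext y; simp [hσ, sub_eq_add_neg]
    rw [hcomp]
    exact h1.comp (h3.comp h2)
  -- inner product facts
  have hcv : ⟪c, v⟫ = 2⁻¹ * (‖x'‖ ^ 2 - ‖x‖ ^ 2) := by
    rw [hc, hv, real_inner_smul_left, inner_add_left, inner_sub_right, inner_sub_right,
      real_inner_self_eq_norm_sq, real_inner_self_eq_norm_sq, real_inner_comm x' x]
    ring
  have hcvpos : 0 < ⟪c, v⟫ := by
    rw [hcv]
    have : ‖x‖ ^ 2 < ‖x'‖ ^ 2 := by
      have h0 := norm_nonneg x
      nlinarith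
    linarith
  clear_value σ R c v
  -- the key pointwise inequality
  have hkey : ∀ y : EuclideanSpace ℝ (Fin d), ‖y - x'‖ ≤ ‖y - x‖ → ‖σ y‖ ≤ ‖y‖ := by
    intro y hy
    set w : EuclideanSpace ℝ (Fin d) := y - c with hw
    clear_value w
    -- half-space condition: ⟪v, w⟫ ≥ 0
    have hsq : ‖y - x'‖ ^ 2 ≤ ‖y - x‖ ^ 2 := by
      have := norm_nonneg (y - x')
      nlinarith
    rw [norm_sub_sq_real, norm_sub_sq_real] at hsq
    have hvw : ⟪v, w⟫ = ⟪y, x'⟫ - ⟪y, x⟫ - 2⁻¹ * (‖x'‖ ^ 2 - ‖x‖ ^ 2) := by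
      rw [hw, hv, hc, inner_sub_left, inner_sub_right, inner_sub_right,
        real_inner_smul_right, real_inner_smul_right, inner_add_right, inner_add_right,
        real_inner_comm x' y, real_inner_comm x y, real_inner_comm x' x,
        real_inner_self_eq_norm_sq, real_inner_self_eq_norm_sq]
      ring
    have hvw0 : 0 ≤ ⟪v, w⟫ := by rw [hvw]; linarith
    -- decompose w using orthogonal projection onto K
    have hmem : w - (K.orthogonalProjection w : EuclideanSpace ℝ (Fin d)) ∈ Kᗮ :=
      K.sub_starProjection_mem_orthogonal w
    have horth : Kᗮ = ℝ ∙ v := by rw [hK]; exact Submodule.orthogonal_orthogonal _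
    rw [horth] at hmem
    obtain ⟨t, ht⟩ := Submodule.mem_span_singleton.1 hmem
    have hvPw : ⟪v, (K.orthogonalProjection w : EuclideanSpace ℝ (Fin d))⟫ = 0 := by
      have hPK : (K.orthogonalProjection w : EuclideanSpace ℝ (Fin d)) ∈ (ℝ ∙ v)ᗮ :=
        (K.orthogonalProjection w).2
      exact (Submodule.mem_orthogonal _ _).1 hPK v (Submodule.mem_span_singleton_self v)
    have hvwt : ⟪v, w⟫ = t * ‖v‖ ^ 2 := by
      have h2 : ⟪v, w - (K.orthogonalProjection w : EuclideanSpace ℝ (Fin d))⟫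
          = t * ‖v‖ ^ 2 := by
        rw [← ht, real_inner_smul_right, real_inner_self_eq_norm_sq]
      rw [inner_sub_right, hvPw, sub_zero] at h2
      exact h2
    have hvnorm : 0 < ‖v‖ ^ 2 := pow_pos (norm_pos_iff.2 hvne) 2
    have ht0 : 0 ≤ t := by
      have h3 : 0 ≤ t * ‖v‖ ^ 2 := hvwt ▸ hvw0
      exact (mul_nonneg_iff_of_pos_right hvnorm).1 h3
    -- compute ⟪c, R w⟫ - ⟪c, w⟫ = -2 t ⟪c, v⟫
    have hRw : (R w : EuclideanSpace ℝ (Fin d)) =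
        2 • (K.orthogonalProjection w : EuclideanSpace ℝ (Fin d)) - w := by
      rw [hR]; exact K.reflection_apply w
    have hPw : (K.orthogonalProjection w : EuclideanSpace ℝ (Fin d)) = w - t • v := by
      rw [ht]; abel
    have hinner : ⟪c, R w⟫ = ⟪c, w⟫ - 2 * t * ⟪c, v⟫ := by
      rw [hRw, hPw, inner_sub_right, two_smul, inner_add_right, inner_sub_right,
        real_inner_smul_right]
      ring
    -- compare squared norms
    have hsq2 : ‖σ y‖ ^ 2 ≤ ‖y‖ ^ 2 := by
      have hy' : y = c + w := by rw [hw]; abel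
      have e1 : ‖σ y‖ ^ 2 = ‖c‖ ^ 2 + 2 * ⟪c, R w⟫ + ‖w‖ ^ 2 := by
        rw [hσ]
        simp only [← hw]
        rw [norm_add_sq_real, R.norm_map]
      have e2 : ‖y‖ ^ 2 = ‖c‖ ^ 2 + 2 * ⟪c, w⟫ + ‖w‖ ^ 2 := by
        rw [hy', norm_add_sq_real]
      rw [e1, e2, hinner]
      nlinarith [mul_nonneg ht0 hcvpos.le]
    have h1 := norm_nonneg (σ y)
    have h2 := norm_nonneg y
    nlinarith
  -- the main measure-theoretic argument
  set B := Metric.closedBall x r with hB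
  set B' := Metric.closedBall x' r with hB'
  have hBm : MeasurableSet B := measurableSet_closedBall
  have hB'm : MeasurableSet B' := measurableSet_closedBall
  have hSm : MeasurableSet (B' \ B) := hB'm.diff hBm
  have hTm : MeasurableSet (B \ B') := hBm.diff hB'm
  have hfm : Measurable fun y : EuclideanSpace ℝ (Fin d) => f ‖y‖ :=
    hf_meas.comp measurable_norm
  have hpre : σ ⁻¹' (B \ B') = B' \ B := by
    ext y
    simp only [Set.mem_preimage, Set.mem_diff, hB, hB', Metric.mem_closedBall,
      dist_eq_norm, hd1 y, hd2 y]
  have keyineq : μ (B' \ B) ≤ μ (B \ B') := by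
    rw [hμ, withDensity_apply _ hSm, withDensity_apply _ hTm]
    calc ∫⁻ y in B' \ B, f ‖y‖ ∂volume
        ≤ ∫⁻ y in B' \ B, f ‖σ y‖ ∂volume := by
          apply setLIntegral_mono (hfm.comp hMP.measurable)
          intro y hy
          have hy1 : ‖y - x'‖ ≤ r := by
            have := hy.1
            rw [hB', Metric.mem_closedBall, dist_eq_norm] at this
            exact this
          have hy2 : r < ‖y - x‖ := by
            have := hy.2
            rw [hB, Metric.mem_closedBall, dist_eq_norm] at this
            push_neg at this
            exact this
          have hle : ‖σ y‖ ≤ ‖y‖ := hkey y (hy1.trans hy2.le)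
          exact hf_mono (Set.mem_Ici.2 (norm_nonneg _)) (Set.mem_Ici.2 (norm_nonneg _)) hle
      _ = ∫⁻ y in σ ⁻¹' (B \ B'), f ‖σ y‖ ∂volume := by rw [hpre]
      _ = ∫⁻ y in B \ B', f ‖y‖ ∂volume :=
          hMP.setLIntegral_comp_preimage hTm hfm
  calc μ B' = μ (B' ∩ B) + μ (B' \ B) := (measure_inter_add_diff B' hBm).symm
    _ ≤ μ (B' ∩ B) + μ (B \ B') := add_le_add_right keyineq _
    _ = μ (B ∩ B') + μ (B \ B') := by rw [Set.inter_comm]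
    _ = μ B := measure_inter_add_diff B hB'm
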